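/- arXiv:2108.00535 — 3 statements merged into one kernel-verified Lean document; each statement's English description precedes it below -/
import Mathlib

section
/- Let U be a random variable supported on (0,1). If E(⌊c - U⌋) = c - 1 for every real c ∈ (0,1), then U is uniformly distributed on (0,1), i.e., P(0 < U ≤ c) = c for all c ∈ (0,1). -/
open MeasureTheory ProbabilityTheory

theorem uniform_of_floor_expectation
    {Ω : Type*} [MeasureSpace Ω] [IsProbabilityMeasure (ℙ : Measure Ω)]
    (U : Ω → ℝ) (hmeas : Measurable U)
    (hsupp : ∀ᵐ ω ∂ℙ, U ω ∈ Set.Ioo (0:ℝ) 1)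
    (hexp : ∀ c ∈ Set.Ioo (0:ℝ) 1, ∫ ω, (⌊c - U ω⌋ : ℝ) ∂ℙ = c - 1) :
    ∀ c ∈ Set.Ioo (0:ℝ) 1, ℙ {ω | 0 < U ω ∧ U ω ≤ c} = ENNReal.ofReal c := by
  intro c hc
  obtain ⟨hc0, hc1⟩ := hc
  set A : Set Ω := {ω | U ω ≤ c} with hA
  have hAmeas : MeasurableSet A := hmeas measurableSet_Iic
  -- a.e. ⌊c - U ω⌋ = indicator A 1 - 1
  have hae : ∀ᵐ ω ∂ℙ, (⌊c - U ω⌋ : ℝ) = A.indicator (fun _ => (1:ℝ)) ω - 1 := by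
    filter_upwards [hsupp] with ω hω
    obtain ⟨h0, h1⟩ := hω
    by_cases h : U ω ≤ c
    · have : ⌊c - U ω⌋ = 0 := by
        apply Int.floor_eq_zero_iff.2
        constructor
        · simpa using sub_nonneg.mpr h
        · simpa using by linarith
      simp [this, Set.indicator_of_mem, hA, h]
    · have hfloor : ⌊c - U ω⌋ = -1 := by
        rw [Int.floor_eq_iff]
        push_cast
        constructor <;> linarith
      have hnot : ω ∉ A := h
      simp [hfloor, Set.indicator_of_notMem hnot]
  have hint : ∫ ω, (⌊c - U ω⌋ : ℝ) ∂ℙ = (ℙ A).toReal - 1 := by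
    rw [integral_congr_ae hae]
    rw [integral_sub (by
        simpa using (integrable_const (1:ℝ)).indicator hAmeas) (integrable_const 1)]
    simp [integral_indicator hAmeas]; rfl
  have hPA : (ℙ A).toReal = c := by
    have := hexp c ⟨hc0, hc1⟩
    rw [hint] at this
    linarith
  have hPAc : ℙ A = ENNReal.ofReal c := by
    rw [← hPA, ENNReal.ofReal_toReal (measure_ne_top _ _)]
  -- now the target set equals A a.e.
  have hsets : ℙ {ω | 0 < U ω ∧ U ω ≤ c} = ℙ A := by
    apply measure_congr
    filter_upwards [hsupp] with ω hω
    show (0 < U ω ∧ U ω ≤ c) = (U ω ≤ c)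
    simp only [eq_iff_iff]
    exact ⟨fun h => h.2, fun h => ⟨hω.1, h⟩⟩
  rw [hsets, hPAc]
end

section
/- For a deterministic point process with inter-arrival t > 0 (events at multiples of t), if the window starts at x with frac(x/t) ~ U[0,1) and the window length is u + η where η is an integrable random variable independent of x with mean 0 (and u + η ≥ 0 a.s.), then the expected number of events in the window is u/t. -/
open MeasureTheory ProbabilityTheory

lemma floor_inner_integral (z : ℝ) :
    ∫ g in Set.Ico (0:ℝ) 1, ((⌊g + z⌋ : ℤ) : ℝ) = z := by
  have hz : ∀ g : ℝ, ((⌊g + z⌋ : ℤ) : ℝ) = (⌊z⌋ : ℝ) + ((⌊g + Int.fract z⌋ : ℤ) : ℝ) := by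
    intro g
    have h : g + z = (g + Int.fract z) + (⌊z⌋ : ℝ) := by
      rw [Int.fract]; ring
    rw [h, Int.floor_add_intCast]; push_cast; ring
  simp_rw [hz]
  set c := Int.fract z with hc
  have hc0 : 0 ≤ c := Int.fract_nonneg z
  have hc1 : c < 1 := Int.fract_lt_one z
  have h1 : Set.EqOn (fun _ : ℝ => (⌊z⌋ : ℝ))
      (fun g : ℝ => (⌊z⌋ : ℝ) + ((⌊g + c⌋ : ℤ) : ℝ)) (Set.Ico (0:ℝ) (1 - c)) := by
    intro g hg
    have hfl : ⌊g + c⌋ = 0 := by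
      rw [Int.floor_eq_zero_iff]
      constructor
      · linarith [hg.1]
      · have := hg.2; simp only [Set.mem_Ico] at *; linarith
    simp [hfl]
  have h2 : Set.EqOn (fun _ : ℝ => (⌊z⌋ : ℝ) + 1)
      (fun g : ℝ => (⌊z⌋ : ℝ) + ((⌊g + c⌋ : ℤ) : ℝ)) (Set.Ico (1 - c) (1:ℝ)) := by
    intro g hg
    have hfl : ⌊g + c⌋ = 1 := by
      apply Int.floor_eq_iff.mpr
      constructor
      · push_cast; linarith [hg.1]
      · push_cast; linarith [hg.2]
    simp [hfl]
  have hunion : Set.Ico (0:ℝ) (1 - c) ∪ Set.Ico (1 - c) 1 = Set.Ico (0:ℝ) 1 :=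
    Set.Ico_union_Ico_eq_Ico (by linarith) (by linarith)
  have hintc1 : IntegrableOn (fun _ : ℝ => (⌊z⌋ : ℝ)) (Set.Ico (0:ℝ) (1 - c)) volume :=
    integrableOn_const measure_Ico_lt_top.ne
  have hintc2 : IntegrableOn (fun _ : ℝ => (⌊z⌋ : ℝ) + 1) (Set.Ico (1 - c) (1:ℝ)) volume :=
    integrableOn_const measure_Ico_lt_top.ne
  have hint1 : IntegrableOn (fun g : ℝ => (⌊z⌋ : ℝ) + ((⌊g + c⌋ : ℤ) : ℝ))
      (Set.Ico (0:ℝ) (1 - c)) volume :=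
    hintc1.congr_fun h1 measurableSet_Ico
  have hint2 : IntegrableOn (fun g : ℝ => (⌊z⌋ : ℝ) + ((⌊g + c⌋ : ℤ) : ℝ))
      (Set.Ico (1 - c) (1:ℝ)) volume :=
    hintc2.congr_fun h2 measurableSet_Ico
  rw [← hunion, setIntegral_union (Set.Ico_disjoint_Ico_same)
      measurableSet_Ico hint1 hint2]
  rw [← setIntegral_congr_fun measurableSet_Ico h1, ← setIntegral_congr_fun measurableSet_Ico h2]
  rw [setIntegral_const, setIntegral_const]
  rw [measureReal_def, measureReal_def, Real.volume_Ico, Real.volume_Ico]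
  rw [ENNReal.toReal_ofReal (by linarith), ENNReal.toReal_ofReal (by linarith)]
  have := Int.floor_add_fract z
  simp only [smul_eq_mul]
  nlinarith [Int.floor_add_fract z]

theorem deterministic_renewal_perturbed_window_expected_count
    {Ω : Type*} [MeasureSpace Ω] [IsProbabilityMeasure (ℙ : Measure Ω)]
    (t : ℝ) (ht : 0 < t) (u : ℝ)
    (x η : Ω → ℝ) (hmeasx : Measurable x) (hmeasη : Measurable η)
    (hfrac : Measure.map (fun ω => Int.fract (x ω / t)) ℙ = volume.restrict (Set.Ico (0:ℝ) 1))
    (hindep : IndepFun η x ℙ)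
    (hint : Integrable η ℙ)
    (hmean : ∫ ω, η ω ∂ℙ = 0)
    (hpos : ∀ᵐ ω ∂ℙ, 0 ≤ u + η ω)
    (hnotint : ∀ᵐ ω ∂ℙ, ∀ n : ℤ, (x ω + u + η ω) / t ≠ (n : ℝ)) :
    ∫ ω, ((⌊(x ω + u + η ω) / t⌋ : ℝ) - (⌊x ω / t⌋ : ℝ)) ∂ℙ = u / t := by
  have htne : t ≠ 0 := ne_of_gt ht
  set G : Ω → ℝ := fun ω => Int.fract (x ω / t) with hG
  set Z : Ω → ℝ := fun ω => (u + η ω) / t with hZ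
  have hGmeas : Measurable G := (hmeasx.div_const t).fract
  have hZmeas : Measurable Z := (measurable_const.add hmeasη).div_const t
  -- pointwise identity
  have hpt : ∀ ω, (⌊(x ω + u + η ω) / t⌋ : ℝ) - (⌊x ω / t⌋ : ℝ)
      = ((⌊G ω + Z ω⌋ : ℤ) : ℝ) := by
    intro ω
    have h1 : (x ω + u + η ω) / t = (G ω + Z ω) + (⌊x ω / t⌋ : ℝ) := by
      have : (x ω + u + η ω) / t = x ω / t + Z ω := by
        rw [hZ]; rw [show x ω + u + η ω = x ω + (u + η ω) by ring, add_div]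
      rw [this, hG]
      simp only [Int.fract]
      ring
    rw [h1, Int.floor_add_intCast]; push_cast; ring
  simp_rw [hpt]
  -- independence and laws
  set μZ := Measure.map Z ℙ with hμZ
  set μG := Measure.map G ℙ with hμG
  have hμGeq : μG = volume.restrict (Set.Ico (0:ℝ) 1) := hfrac
  have hind : IndepFun Z G ℙ := by
    exact hindep.comp ((measurable_const.add measurable_id).div_const t)
      ((measurable_id.div_const t).fract)
  have hlaw : Measure.map (fun ω => (Z ω, G ω)) ℙ = μZ.prod μG :=
    (indepFun_iff_map_prod_eq_prod_map_map hZmeas.aemeasurable hGmeas.aemeasurable).mp hind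
  have hZprob : IsProbabilityMeasure μZ := Measure.isProbabilityMeasure_map hZmeas.aemeasurable
  have hGprob : IsProbabilityMeasure μG := by
    rw [hμGeq]
    constructor
    simp [Real.volume_Ico]
  -- the integrand on the product space
  set f : ℝ × ℝ → ℝ := fun p => ((⌊p.2 + p.1⌋ : ℤ) : ℝ) with hf
  have hfmeas : Measurable f := by
    apply measurable_from_top.comp
    exact (measurable_snd.add measurable_fst).floor
  -- integrability of Z-related things
  have hZint : Integrable Z ℙ := ((integrable_const u).add hint).div_const t
  have hid : Integrable (fun z : ℝ => z) μZ := by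
    rw [hμZ]
    exact (integrable_map_measure aestronglyMeasurable_id hZmeas.aemeasurable).mpr hZint
  -- a.e. bound on the product
  have haeG : ∀ᵐ p ∂(μZ.prod μG), p.2 ∈ Set.Ico (0:ℝ) 1 := by
    rw [ae_iff]
    have hset : {p : ℝ × ℝ | ¬ p.2 ∈ Set.Ico (0:ℝ) 1}
        = (Set.univ : Set ℝ) ×ˢ (Set.Ico (0:ℝ) 1)ᶜ := by
      ext p; simp
    rw [hset, Measure.prod_prod]
    have : μG (Set.Ico (0:ℝ) 1)ᶜ = 0 := by
      rw [hμGeq, Measure.restrict_apply measurableSet_Ico.compl]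
      simp
    rw [this, mul_zero]
  have hbound_int : Integrable (fun p : ℝ × ℝ => |p.1| + 2) (μZ.prod μG) := by
    apply Integrable.add _ (integrable_const 2)
    have hmap : Measure.map Prod.fst (μZ.prod μG) = μZ := by
      rw [Measure.map_fst_prod]
      simp
    have : Integrable (fun z : ℝ => |z|) (Measure.map Prod.fst (μZ.prod μG)) := by
      rw [hmap]; exact hid.abs
    have h1 : Integrable (fun z : ℝ => |z|) (Measure.map Prod.fst (μZ.prod μG)) := by
      rw [hmap]; exact hid.abs
    exact (integrable_map_measure (by rw [hmap]; exact hid.abs.aestronglyMeasurable)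
      measurable_fst.aemeasurable).mp h1
  have hfint : Integrable f (μZ.prod μG) := by
    apply Integrable.mono' hbound_int hfmeas.aestronglyMeasurable
    filter_upwards [haeG] with p hp
    have h1 : ((⌊p.2 + p.1⌋ : ℤ) : ℝ) ≤ p.2 + p.1 := Int.floor_le _
    have h2 : p.2 + p.1 - 1 < ((⌊p.2 + p.1⌋ : ℤ) : ℝ) := by
      linarith [Int.sub_one_lt_floor (p.2 + p.1)]
    have hp0 := hp.1
    have hp1 := hp.2
    rw [hf, Real.norm_eq_abs, abs_le]
    constructor
    · nlinarith [neg_abs_le p.1]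
    · nlinarith [le_abs_self p.1]
  -- main computation
  calc ∫ ω, ((⌊G ω + Z ω⌋ : ℤ) : ℝ) ∂ℙ
      = ∫ p, f p ∂(Measure.map (fun ω => (Z ω, G ω)) ℙ) := by
        rw [integral_map (hZmeas.prodMk hGmeas).aemeasurable hfmeas.aestronglyMeasurable]
    _ = ∫ p, f p ∂(μZ.prod μG) := by rw [hlaw]
    _ = ∫ z, ∫ g, f (z, g) ∂μG ∂μZ := integral_prod f hfint
    _ = ∫ z, z ∂μZ := by
        apply integral_congr_ae
        filter_upwards with z
        rw [hμGeq]
        exact floor_inner_integral z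
    _ = ∫ ω, Z ω ∂ℙ := by
        rw [hμZ]
        exact integral_map hZmeas.aemeasurable aestronglyMeasurable_id
    _ = u / t := by
        rw [hZ]
        simp only
        rw [integral_div]
        rw [integral_add (integrable_const u) hint, hmean, integral_const]
        simp
end

section
/- If Y_σ is a Gaussian random variable with fixed mean and variance σ² → ∞, then the fractional part Y_σ - ⌊Y_σ⌋ converges in distribution to the uniform distribution on [0,1). -/
open MeasureTheory ProbabilityTheory Filter Real Set Topology

noncomputable def gM (v : NNReal) : ℝ := (Real.sqrt (2 * π * v))⁻¹

lemma gM_nonneg (v : NNReal) : 0 ≤ gM v := by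
  unfold gM; positivity

lemma pdf_le_gM (m : ℝ) (v : NNReal) (y : ℝ) : gaussianPDFReal m v y ≤ gM v := by
  unfold gaussianPDFReal gM
  have h1 : rexp (-(y-m)^2 / (2*(v:ℝ))) ≤ 1 := by
    rw [Real.exp_le_one_iff]
    have : (0:ℝ) ≤ (y-m)^2 / (2*(v:ℝ)) := by positivity
    linarith [neg_div (2*(v:ℝ)) ((y-m)^2)]
  calc (√(2 * π * v))⁻¹ * rexp (-(y - m) ^ 2 / (2 * v)) ≤ (√(2 * π * v))⁻¹ * 1 := by
        apply mul_le_mul_of_nonneg_left h1; positivity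
    _ = (√(2 * π * v))⁻¹ := mul_one _

lemma pdf_anti (m : ℝ) (v : NNReal) {a b : ℝ} (ha : m ≤ a) (hab : a ≤ b) :
    gaussianPDFReal m v b ≤ gaussianPDFReal m v a := by
  unfold gaussianPDFReal
  apply mul_le_mul_of_nonneg_left _ (by positivity)
  apply Real.exp_le_exp.2
  apply div_le_div_of_nonneg_right ?_ (by positivity)
  nlinarith

lemma pdf_mono (m : ℝ) (v : NNReal) {a b : ℝ} (hb : b ≤ m) (hab : a ≤ b) :
    gaussianPDFReal m v a ≤ gaussianPDFReal m v b := by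
  unfold gaussianPDFReal
  apply mul_le_mul_of_nonneg_left _ (by positivity)
  apply Real.exp_le_exp.2
  apply div_le_div_of_nonneg_right ?_ (by positivity)
  nlinarith


open MeasureTheory ProbabilityTheory Filter Real Set

lemma integral_Icc_le {f : ℝ → ℝ} {a b : ℝ} (hab : a ≤ b)
    (hf : IntegrableOn f (Set.Icc a b)) {c : ℝ} (h : ∀ y ∈ Set.Icc a b, f y ≤ c) :
    ∫ y in Set.Icc a b, f y ≤ (b - a) * c := by
  calc ∫ y in Set.Icc a b, f y ≤ ∫ _ in Set.Icc a b, c :=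
        setIntegral_mono_on hf (integrableOn_const (by simp) (by simp)) measurableSet_Icc h
    _ = (b - a) * c := by
        rw [setIntegral_const, measureReal_def, Real.volume_Icc, ENNReal.toReal_ofReal (by linarith)]; rfl

lemma le_integral_Icc {f : ℝ → ℝ} {a b : ℝ} (hab : a ≤ b)
    (hf : IntegrableOn f (Set.Icc a b)) {c : ℝ} (h : ∀ y ∈ Set.Icc a b, c ≤ f y) :
    (b - a) * c ≤ ∫ y in Set.Icc a b, f y := by
  calc (b - a) * c = ∫ _ in Set.Icc a b, c := by
        rw [setIntegral_const, measureReal_def, Real.volume_Icc, ENNReal.toReal_ofReal (by linarith)]; rfl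
    _ ≤ ∫ y in Set.Icc a b, f y :=
        setIntegral_mono_on (integrableOn_const (by simp) (by simp)) hf measurableSet_Icc h

lemma integral_Ico_le {f : ℝ → ℝ} {a b : ℝ} (hab : a ≤ b)
    (hf : IntegrableOn f (Set.Ico a b)) {c : ℝ} (h : ∀ y ∈ Set.Ico a b, f y ≤ c) :
    ∫ y in Set.Ico a b, f y ≤ (b - a) * c := by
  calc ∫ y in Set.Ico a b, f y ≤ ∫ _ in Set.Ico a b, c :=
        setIntegral_mono_on hf (integrableOn_const (by simp) (by simp)) measurableSet_Ico h
    _ = (b - a) * c := by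
        rw [setIntegral_const, measureReal_def, Real.volume_Ico, ENNReal.toReal_ofReal (by linarith)]; rfl

lemma le_integral_Ico {f : ℝ → ℝ} {a b : ℝ} (hab : a ≤ b)
    (hf : IntegrableOn f (Set.Ico a b)) {c : ℝ} (h : ∀ y ∈ Set.Ico a b, c ≤ f y) :
    (b - a) * c ≤ ∫ y in Set.Ico a b, f y := by
  calc (b - a) * c = ∫ _ in Set.Ico a b, c := by
        rw [setIntegral_const, measureReal_def, Real.volume_Ico, ENNReal.toReal_ofReal (by linarith)]; rfl
    _ ≤ ∫ y in Set.Ico a b, f y :=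
        setIntegral_mono_on (integrableOn_const (by simp) (by simp)) hf measurableSet_Ico h

lemma fract_set_eq (x : ℝ) (hx0 : 0 ≤ x) (hx1 : x < 1) :
    {y : ℝ | Int.fract y ≤ x} = ⋃ n : ℤ, Set.Icc (n:ℝ) ((n:ℝ)+x) := by
  ext y
  simp only [Set.mem_setOf_eq, Set.mem_iUnion, Set.mem_Icc]
  constructor
  · intro h
    refine ⟨⌊y⌋, Int.floor_le y, ?_⟩
    have h2 : y - ⌊y⌋ ≤ x := by rw [Int.self_sub_floor]; exact h
    linarith
  · rintro ⟨n, h1, h2⟩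
    have hfl : ⌊y⌋ = n := by
      rw [Int.floor_eq_iff]
      exact ⟨h1, by linarith⟩
    have : Int.fract y = y - n := by rw [← hfl, ← Int.self_sub_floor]
    rw [this]; linarith

lemma union_Ico_eq : (⋃ n : ℤ, Set.Ico (n:ℝ) ((n:ℝ)+1)) = Set.univ := by
  ext y
  simp only [Set.mem_iUnion, Set.mem_Ico, Set.mem_univ, iff_true]
  exact ⟨⌊y⌋, Int.floor_le y, Int.lt_floor_add_one y⟩


lemma icc_succ (n₀ : ℤ) (K : ℕ) :
    Finset.Icc (n₀ - (K+1:ℕ)) (n₀ + (K+1:ℕ)) =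
      insert (n₀ - (K+1:ℕ)) (insert (n₀ + (K+1:ℕ)) (Finset.Icc (n₀ - K) (n₀ + K))) := by
  ext n
  simp only [Finset.mem_Icc, Finset.mem_insert]
  push_cast
  omega

lemma tele_sum (c F G : ℤ → ℝ) (n₀ : ℤ) (Cst : ℝ)
    (hc : ∀ n, 0 ≤ c n)
    (hcen : c n₀ ≤ Cst)
    (hpos : ∀ n, n₀ < n → c n ≤ F n - F (n+1))
    (hneg : ∀ n, n < n₀ → c n ≤ G (n+1) - G n) :
    ∀ K : ℕ, ∑ n ∈ Finset.Icc (n₀ - K) (n₀ + K), c n ≤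
      Cst + (F (n₀+1) - F (n₀+K+1)) + (G n₀ - G (n₀-K)) := by
  intro K
  induction K with
  | zero => simp [hcen]
  | succ K ih =>
    rw [icc_succ]
    rw [Finset.sum_insert (by simp only [Finset.mem_insert, Finset.mem_Icc]; push_cast; omega),
        Finset.sum_insert (by simp only [Finset.mem_Icc]; push_cast; omega)]
    have h1 : c (n₀ + ((K:ℤ)+1)) ≤ F (n₀ + K + 1) - F (n₀ + ((K:ℤ)+1) + 1) := by
      have := hpos (n₀ + ((K:ℤ)+1)) (by omega)
      convert this using 3 <;> push_cast <;> ring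
    have h2 : c (n₀ - (K:ℤ) - 1) ≤ G (n₀ - K) - G (n₀ - (K:ℤ) - 1) := by
      have := hneg (n₀ - (K:ℤ) - 1) (by omega)
      convert this using 3 <;> push_cast <;> ring
    push_cast
    rw [show n₀ - ((K:ℤ)+1) = n₀ - K - 1 by ring]
    linarith [ih]

lemma tsum_c_le (c F G : ℤ → ℝ) (n₀ : ℤ) (Cst : ℝ)
    (hc : ∀ n, 0 ≤ c n)
    (hcen : c n₀ ≤ Cst)
    (hpos : ∀ n, n₀ < n → c n ≤ F n - F (n+1))
    (hneg : ∀ n, n < n₀ → c n ≤ G (n+1) - G n)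
    (hF : ∀ n, 0 ≤ F n) (hG : ∀ n, 0 ≤ G n) :
    Summable c ∧ ∑' n, c n ≤ Cst + F (n₀+1) + G n₀ := by
  have key : ∀ u : Finset ℤ, ∑ n ∈ u, c n ≤ Cst + F (n₀+1) + G n₀ := by
    intro u
    set K : ℕ := u.sup (fun n => (n - n₀).natAbs) with hK
    have hsub : u ⊆ Finset.Icc (n₀ - K) (n₀ + K) := by
      intro n hn
      have h2 : (n - n₀).natAbs ≤ K := Finset.le_sup (f := fun n => (n - n₀).natAbs) hn
      simp only [Finset.mem_Icc]
      omega
    calc ∑ n ∈ u, c n ≤ ∑ n ∈ Finset.Icc (n₀ - K) (n₀ + K), c n :=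
          Finset.sum_le_sum_of_subset_of_nonneg hsub (fun i _ _ => hc i)
      _ ≤ Cst + (F (n₀+1) - F (n₀+K+1)) + (G n₀ - G (n₀-K)) :=
          tele_sum c F G n₀ Cst hc hcen hpos hneg K
      _ ≤ Cst + F (n₀+1) + G n₀ := by linarith [hF (n₀+K+1), hG (n₀-K)]
  have hs : Summable c := summable_of_sum_le hc key
  exact ⟨hs, Summable.tsum_le_of_sum_le hs key⟩

lemma core_estimate (m : ℝ) {x : ℝ} (hx0 : 0 < x) (hx1 : x < 1) {v : NNReal} (hv : v ≠ 0) :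
    |((gaussianReal m v) {y : ℝ | Int.fract y ≤ x}).toReal - x| ≤ 4 * gM v := by
  set f := gaussianPDFReal m v with hf
  have hInt : Integrable f := integrable_gaussianPDFReal m v
  have hfnn : ∀ y, 0 ≤ f y := gaussianPDFReal_nonneg m v
  set A : ℤ → Set ℝ := fun n => Set.Icc (n:ℝ) ((n:ℝ)+x) with hA
  set B : ℤ → Set ℝ := fun n => Set.Ico (n:ℝ) ((n:ℝ)+1) with hB
  set a : ℤ → ℝ := fun n => ∫ y in A n, f y with ha
  set b : ℤ → ℝ := fun n => ∫ y in B n, f y with hb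
  have hdisjA : Pairwise (Function.onFun Disjoint A) := by
    intro i j hij
    rcases lt_or_gt_of_ne hij with h | h
    · apply Set.disjoint_left.2
      rintro y ⟨h1, h2⟩ ⟨h3, h4⟩
      have : (i:ℝ) + 1 ≤ j := by exact_mod_cast h
      linarith
    · apply Set.disjoint_right.2
      rintro y ⟨h1, h2⟩ ⟨h3, h4⟩
      have : (j:ℝ) + 1 ≤ i := by exact_mod_cast h
      linarith
  have hdisjB : Pairwise (Function.onFun Disjoint B) := by
    intro i j hij
    rcases lt_or_gt_of_ne hij with h | h
    · apply Set.disjoint_left.2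
      rintro y ⟨h1, h2⟩ ⟨h3, h4⟩
      have : (i:ℝ) + 1 ≤ j := by exact_mod_cast h
      linarith
    · apply Set.disjoint_right.2
      rintro y ⟨h1, h2⟩ ⟨h3, h4⟩
      have : (j:ℝ) + 1 ≤ i := by exact_mod_cast h
      linarith
  have hSumA : HasSum a (∫ y in ⋃ n, A n, f y) :=
    hasSum_integral_iUnion (fun n => measurableSet_Icc) hdisjA hInt.integrableOn
  have hSumB : HasSum b 1 := by
    have h1 : HasSum b (∫ y in ⋃ n, B n, f y) :=
      hasSum_integral_iUnion (fun n => measurableSet_Ico) hdisjB hInt.integrableOn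
    rwa [hB, union_Ico_eq, setIntegral_univ, integral_gaussianPDFReal_eq_one m hv] at h1
  have hμ : ((gaussianReal m v) {y : ℝ | Int.fract y ≤ x}).toReal = ∫ y in ⋃ n, A n, f y := by
    rw [fract_set_eq x hx0.le hx1, gaussianReal_apply_eq_integral m hv,
      ENNReal.toReal_ofReal (setIntegral_nonneg (MeasurableSet.iUnion fun n => measurableSet_Icc)
        (fun y _ => hfnn y))]
  have hSum : HasSum (fun n => a n - x * b n) ((∫ y in ⋃ n, A n, f y) - x) := by
    simpa using hSumA.sub (hSumB.mul_left x)
  set c : ℤ → ℝ := fun n => |a n - x * b n| with hc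
  set n₀ : ℤ := ⌊m⌋ with hn₀
  set F : ℤ → ℝ := fun n => f (n:ℝ) with hF
  -- bounds on a and b
  have hann : ∀ n, 0 ≤ a n := fun n =>
    setIntegral_nonneg measurableSet_Icc (fun y _ => hfnn y)
  have hbnn : ∀ n, 0 ≤ b n := fun n =>
    setIntegral_nonneg measurableSet_Ico (fun y _ => hfnn y)
  have hcen : c n₀ ≤ 2 * gM v := by
    have h1 : a n₀ ≤ x * gM v := by
      have := integral_Icc_le (f := f) (by linarith : (n₀:ℝ) ≤ (n₀:ℝ) + x)
        hInt.integrableOn (fun y _ => pdf_le_gM m v y)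
      rwa [add_sub_cancel_left] at this
    have h2 : b n₀ ≤ 1 * gM v := by
      have := integral_Ico_le (f := f) (by linarith : (n₀:ℝ) ≤ (n₀:ℝ) + 1)
        hInt.integrableOn (fun y _ => pdf_le_gM m v y)
      rwa [add_sub_cancel_left] at this
    have h3 := gM_nonneg v
    rw [hc, abs_le]
    constructor
    · have := hann n₀; nlinarith [hbnn n₀]
    · nlinarith [hbnn n₀, hann n₀]
  have hpos : ∀ n, n₀ < n → c n ≤ F n - F (n+1) := by
    intro n hn
    have hmn : m ≤ (n:ℝ) := by
      have h1 : n₀ + 1 ≤ n := hn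
      have h2 : ((n₀:ℝ)) + 1 ≤ (n:ℝ) := by exact_mod_cast h1
      have := Int.lt_floor_add_one m
      rw [← hn₀] at this
      linarith
    have hmono : f ((n:ℝ)+1) ≤ f (n:ℝ) := pdf_anti m v hmn (by linarith)
    have h1 : a n ≤ x * f (n:ℝ) := by
      have := integral_Icc_le (f := f) (by linarith : (n:ℝ) ≤ (n:ℝ) + x)
        hInt.integrableOn (fun y hy => pdf_anti m v hmn hy.1)
      rwa [add_sub_cancel_left] at this
    have h2 : x * f ((n:ℝ)+1) ≤ a n := by
      have := le_integral_Icc (f := f) (by linarith : (n:ℝ) ≤ (n:ℝ) + x)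
        hInt.integrableOn (fun y hy => pdf_anti m v (a := y) (b := (n:ℝ)+1)
          (le_trans hmn hy.1) (by have := hy.2; linarith))
      rwa [add_sub_cancel_left] at this
    have h3 : b n ≤ 1 * f (n:ℝ) := by
      have := integral_Ico_le (f := f) (by linarith : (n:ℝ) ≤ (n:ℝ) + 1)
        hInt.integrableOn (fun y hy => pdf_anti m v hmn hy.1)
      rwa [add_sub_cancel_left] at this
    have h4 : 1 * f ((n:ℝ)+1) ≤ b n := by
      have := le_integral_Ico (f := f) (by linarith : (n:ℝ) ≤ (n:ℝ) + 1)
        hInt.integrableOn (fun y hy => pdf_anti m v (a := y) (b := (n:ℝ)+1)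
          (le_trans hmn hy.1) (le_of_lt hy.2))
      rwa [add_sub_cancel_left] at this
    have key : c n ≤ f (n:ℝ) - f ((n:ℝ)+1) := by
      rw [hc, abs_le]
      constructor
      · nlinarith
      · nlinarith
    simp only [hF]
    push_cast
    exact key
  have hneg : ∀ n, n < n₀ → c n ≤ F (n+1) - F n := by
    intro n hn
    have hmn : (n:ℝ) + 1 ≤ m := by
      have h1 : n + 1 ≤ n₀ := hn
      have h2 : ((n:ℝ)) + 1 ≤ (n₀:ℝ) := by exact_mod_cast h1
      have := Int.floor_le m
      rw [← hn₀] at this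
      linarith
    have hmono : f (n:ℝ) ≤ f ((n:ℝ)+1) := pdf_mono m v hmn (by linarith)
    have h1 : a n ≤ x * f ((n:ℝ)+1) := by
      have := integral_Icc_le (f := f) (by linarith : (n:ℝ) ≤ (n:ℝ) + x)
        hInt.integrableOn (fun y hy => pdf_mono m v (a := y) (b := (n:ℝ)+1) hmn
          (by have := hy.2; linarith))
      rwa [add_sub_cancel_left] at this
    have h2 : x * f (n:ℝ) ≤ a n := by
      have := le_integral_Icc (f := f) (by linarith : (n:ℝ) ≤ (n:ℝ) + x)
        hInt.integrableOn (fun y hy => pdf_mono m v (a := (n:ℝ)) (b := y)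
          (by have := hy.2; linarith) hy.1)
      rwa [add_sub_cancel_left] at this
    have h3 : b n ≤ 1 * f ((n:ℝ)+1) := by
      have := integral_Ico_le (f := f) (by linarith : (n:ℝ) ≤ (n:ℝ) + 1)
        hInt.integrableOn (fun y hy => pdf_mono m v (a := y) (b := (n:ℝ)+1) hmn
          (by have := hy.2; linarith))
      rwa [add_sub_cancel_left] at this
    have h4 : 1 * f (n:ℝ) ≤ b n := by
      have := le_integral_Ico (f := f) (by linarith : (n:ℝ) ≤ (n:ℝ) + 1)
        hInt.integrableOn (fun y hy => pdf_mono m v (a := (n:ℝ)) (b := y)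
          (by have := hy.2; linarith) hy.1)
      rwa [add_sub_cancel_left] at this
    have key : c n ≤ f ((n:ℝ)+1) - f (n:ℝ) := by
      rw [hc, abs_le]
      constructor
      · nlinarith
      · nlinarith
    simp only [hF]
    push_cast
    exact key
  obtain ⟨hcs, hcle⟩ := tsum_c_le c F F n₀ (2 * gM v) (fun n => abs_nonneg _)
    hcen hpos hneg (fun n => hfnn _) (fun n => hfnn _)
  rw [hμ, ← hSum.tsum_eq]
  calc |∑' n, (a n - x * b n)| ≤ ∑' n, c n := by
        have := norm_tsum_le_tsum_norm (f := fun n => a n - x * b n) (by simpa [Real.norm_eq_abs] using hcs)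
        simpa [Real.norm_eq_abs] using this
    _ ≤ 2 * gM v + F (n₀+1) + F n₀ := hcle
    _ ≤ 4 * gM v := by
        have e1 : F (n₀+1) ≤ gM v := pdf_le_gM m v _
        have e2 : F n₀ ≤ gM v := pdf_le_gM m v _
        linarith


theorem fract_gaussian_tendsto_uniform (m : ℝ) :
    ∀ x ∈ Set.Ioo (0:ℝ) 1,
      Tendsto (fun v : NNReal =>
          ((gaussianReal m v) {y : ℝ | Int.fract y ≤ x}).toReal)
        atTop (nhds x) := by
  intro x hx
  obtain ⟨hx0, hx1⟩ := hx
  have hM : Tendsto (fun v : NNReal => 4 * gM v) atTop (𝓝 0) := by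
    have h1 : Tendsto (fun v : NNReal => (v:ℝ)) atTop atTop :=
      NNReal.tendsto_coe_atTop.2 tendsto_id
    have h2 : Tendsto (fun v : NNReal => 2 * π * (v:ℝ)) atTop atTop :=
      h1.const_mul_atTop (by positivity)
    have h3 : Tendsto (fun v : NNReal => Real.sqrt (2 * π * (v:ℝ))) atTop atTop := by
      have h4 := (tendsto_rpow_atTop (by norm_num : (0:ℝ) < 1/2)).comp h2
      refine h4.congr fun v => ?_
      rw [Function.comp_apply, Real.sqrt_eq_rpow]
    have h5 : Tendsto (fun v : NNReal => gM v) atTop (𝓝 0) := by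
      have := tendsto_inv_atTop_zero.comp h3
      exact this
    have := h5.const_mul (4:ℝ)
    simpa using this
  have hb : ∀ᶠ v : NNReal in atTop,
      ‖((gaussianReal m v) {y : ℝ | Int.fract y ≤ x}).toReal - x‖ ≤ 4 * gM v := by
    filter_upwards [eventually_ge_atTop 1] with v hv1
    have hv : v ≠ 0 := (zero_lt_one.trans_le hv1).ne'
    simpa [Real.norm_eq_abs] using core_estimate m hx0 hx1 hv
  exact tendsto_sub_nhds_zero_iff.mp (squeeze_zero_norm' hb hM)
end
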